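/- Sphere exchange rule: Let r, R > 0 and fix x, y ∈ ℝ^(k+1) with |x| = r and |y| = R. If g : ℝ → ℂ is integrable on [|R − r|, R + r], then R^k · ∫_{S^k(r)} g(|x₁ − y|) dS_{x₁} = r^k · ∫_{S^k(R)} g(|x − y₁|) dS_{y₁}, where the integrals are over the spheres of radii r and R centered at the origin with respect to the induced surface measure. -/

import Mathlib

open MeasureTheory Metric
open scoped Pointwise RealInnerProductSpace ENNReal NNReal

/-- Scaling a sphere integral down to the unit sphere. -/
lemma sphere_integral_smul_aux (k : ℕ) {c : ℝ} (hc : 0 < c)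
    (f : EuclideanSpace ℝ (Fin (k+1)) → ℂ) :
    ∫ w in sphere (0 : EuclideanSpace ℝ (Fin (k+1))) c, f w ∂(μH[(k : ℝ)]) =
    c ^ k * ∫ z in sphere (0 : EuclideanSpace ℝ (Fin (k+1))) 1, f (c • z) ∂(μH[(k : ℝ)]) := by
  have hc' : c ≠ 0 := hc.ne'
  let e : EuclideanSpace ℝ (Fin (k+1)) ≃ᵐ EuclideanSpace ℝ (Fin (k+1)) :=
    (Homeomorph.smulOfNeZero c hc').toMeasurableEquiv
  have he : ∀ z : EuclideanSpace ℝ (Fin (k+1)), e z = c • z := fun z => rfl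
  have hmap : μH[(k : ℝ)].restrict (sphere (0 : EuclideanSpace ℝ (Fin (k+1))) c) =
      ((‖c‖₊ : ℝ≥0∞) ^ (k : ℝ)) •
        Measure.map e (μH[(k : ℝ)].restrict (sphere (0 : EuclideanSpace ℝ (Fin (k+1))) 1)) := by
    ext A hA
    rw [Measure.smul_apply, Measure.map_apply e.measurable hA,
      Measure.restrict_apply hA, Measure.restrict_apply (e.measurable hA)]
    have hpre : e ⁻¹' A = c⁻¹ • A := by
      ext w
      simp only [Set.mem_preimage, he, Set.mem_smul_set_iff_inv_smul_mem₀ (inv_ne_zero hc'),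
        inv_inv]
    have hsph : c⁻¹ • sphere (0 : EuclideanSpace ℝ (Fin (k+1))) c
        = sphere (0 : EuclideanSpace ℝ (Fin (k+1))) 1 := by
      rw [smul_sphere' (inv_ne_zero hc'), smul_zero, norm_inv, Real.norm_eq_abs,
        abs_of_pos hc, inv_mul_cancel₀ hc']
    have hinter : e ⁻¹' A ∩ sphere (0 : EuclideanSpace ℝ (Fin (k+1))) 1 =
        c⁻¹ • (A ∩ sphere (0 : EuclideanSpace ℝ (Fin (k+1))) c) := by
      rw [hpre, ← hsph, Set.smul_set_inter₀ (inv_ne_zero hc')]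
    rw [hinter, Measure.hausdorffMeasure_smul₀ (by positivity : (0:ℝ) ≤ (k:ℝ))
      (inv_ne_zero hc')]
    have h1 : (‖c⁻¹‖₊ : ℝ≥0) = ‖c‖₊⁻¹ := by simp
    simp only [h1, ENNReal.smul_def, smul_eq_mul]
    rw [← mul_assoc,
      ← ENNReal.coe_rpow_of_ne_zero (by simpa using hc'), ← ENNReal.coe_mul,
      ← NNReal.mul_rpow, mul_inv_cancel₀ (by simpa using hc'), NNReal.one_rpow,
      ENNReal.coe_one, one_mul]
  rw [hmap, integral_smul_measure, MeasureTheory.integral_map_equiv]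
  simp only [he, smul_eq_mul]
  congr 1
  rw [← ENNReal.toReal_rpow]
  simp [Real.norm_eq_abs, abs_of_pos hc, Real.rpow_natCast]

/-- Invariance of sphere integrals under linear isometry equivalences. -/
lemma sphere_integral_isometry_aux (k : ℕ) (s : ℝ)
    (T : EuclideanSpace ℝ (Fin (k+1)) ≃ₗᵢ[ℝ] EuclideanSpace ℝ (Fin (k+1)))
    (f : EuclideanSpace ℝ (Fin (k+1)) → ℂ) :
    ∫ z in sphere (0 : EuclideanSpace ℝ (Fin (k+1))) s, f (T z) ∂(μH[(k : ℝ)]) =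
    ∫ z in sphere (0 : EuclideanSpace ℝ (Fin (k+1))) s, f z ∂(μH[(k : ℝ)]) := by
  let e : EuclideanSpace ℝ (Fin (k+1)) ≃ᵐ EuclideanSpace ℝ (Fin (k+1)) :=
    T.toHomeomorph.toMeasurableEquiv
  have he : (⇑e : EuclideanSpace ℝ (Fin (k+1)) → EuclideanSpace ℝ (Fin (k+1))) = ⇑T := rfl
  have hmap : Measure.map e
        (μH[(k : ℝ)].restrict (sphere (0 : EuclideanSpace ℝ (Fin (k+1))) s)) =
      μH[(k : ℝ)].restrict (sphere (0 : EuclideanSpace ℝ (Fin (k+1))) s) := by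
    ext A hA
    rw [Measure.map_apply e.measurable hA, Measure.restrict_apply (e.measurable hA),
      Measure.restrict_apply hA]
    have hsph : e ⁻¹' (sphere (0 : EuclideanSpace ℝ (Fin (k+1))) s) =
        sphere (0 : EuclideanSpace ℝ (Fin (k+1))) s := by
      ext z
      simp [he, mem_sphere_iff_norm]
    have h2 : e ⁻¹' A ∩ sphere (0 : EuclideanSpace ℝ (Fin (k+1))) s =
        e ⁻¹' (A ∩ sphere (0 : EuclideanSpace ℝ (Fin (k+1))) s) := by
      rw [Set.preimage_inter, hsph]
    rw [h2, he]
    have := T.isometry.hausdorffMeasure_preimage (d := (k : ℝ))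
      (Or.inr T.surjective) (A ∩ sphere (0 : EuclideanSpace ℝ (Fin (k+1))) s)
    simpa [Set.range_eq_univ.mpr T.surjective] using this
  conv_rhs => rw [← hmap]
  rw [MeasureTheory.integral_map_equiv]
  rfl

theorem stmt3 (k : ℕ) (r R : ℝ) (hr : 0 < r) (hR : 0 < R)
    (x y : EuclideanSpace ℝ (Fin (k+1))) (hx : ‖x‖ = r) (hy : ‖y‖ = R)
    (g : ℝ → ℂ) (hg : IntegrableOn g (Set.Icc |R - r| (R + r))) :
    (R : ℂ)^k * ∫ x₁ in sphere (0 : EuclideanSpace ℝ (Fin (k+1))) r,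
        g (dist x₁ y) ∂(μH[(k : ℝ)]) =
    (r : ℂ)^k * ∫ y₁ in sphere (0 : EuclideanSpace ℝ (Fin (k+1))) R,
        g (dist x y₁) ∂(μH[(k : ℝ)]) := by
  set v : EuclideanSpace ℝ (Fin (k+1)) := (R / r) • x with hv
  have hvn : ‖v‖ = ‖y‖ := by
    rw [hv, norm_smul, Real.norm_eq_abs, abs_of_pos (by positivity), hx, hy,
      div_mul_cancel₀ _ hr.ne']
  set T : EuclideanSpace ℝ (Fin (k+1)) ≃ₗᵢ[ℝ] EuclideanSpace ℝ (Fin (k+1)) :=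
    Submodule.reflection (ℝ ∙ (v - y))ᗮ with hT
  have hTv : T v = y := Submodule.reflection_sub hvn
  have key : ∀ z ∈ sphere (0 : EuclideanSpace ℝ (Fin (k+1))) 1,
      dist (r • T z) y = dist x (R • z) := by
    intro z hz
    have hz1 : ‖z‖ = 1 := by simpa [mem_sphere_iff_norm] using hz
    have hTz : ‖T z‖ = 1 := by rw [T.norm_map, hz1]
    rw [dist_eq_norm, dist_eq_norm]
    have hinner : ⟪T z, y⟫ = (R / r) * ⟪z, x⟫ := by
      rw [← hTv, T.inner_map_map, hv, real_inner_smul_right]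
    have h1 : ‖r • T z - y‖ ^ 2 = r^2 - 2 * (R * ⟪z, x⟫) + R^2 := by
      rw [norm_sub_sq_real, norm_smul, real_inner_smul_left, hinner, hy,
        Real.norm_eq_abs, abs_of_pos hr, hTz]
      field_simp
    have h2 : ‖x - R • z‖ ^ 2 = r^2 - 2 * (R * ⟪z, x⟫) + R^2 := by
      rw [norm_sub_sq_real, norm_smul, real_inner_smul_right, hx,
        Real.norm_eq_abs, abs_of_pos hR, hz1, real_inner_comm]
      ring
    nlinarith [norm_nonneg (r • T z - y), norm_nonneg (x - R • z)]
  have L : ∫ x₁ in sphere (0 : EuclideanSpace ℝ (Fin (k+1))) r,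
        g (dist x₁ y) ∂(μH[(k : ℝ)]) =
      r ^ k * ∫ z in sphere (0 : EuclideanSpace ℝ (Fin (k+1))) 1,
        g (dist x (R • z)) ∂(μH[(k : ℝ)]) := by
    rw [sphere_integral_smul_aux k hr (fun w => g (dist w y))]
    congr 1
    rw [← sphere_integral_isometry_aux k 1 T (fun z => g (dist (r • z) y))]
    exact MeasureTheory.setIntegral_congr_fun isClosed_sphere.measurableSet
      (fun z hz => by rw [key z hz])
  have Rr : ∫ y₁ in sphere (0 : EuclideanSpace ℝ (Fin (k+1))) R,
        g (dist x y₁) ∂(μH[(k : ℝ)]) =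
      R ^ k * ∫ z in sphere (0 : EuclideanSpace ℝ (Fin (k+1))) 1,
        g (dist x (R • z)) ∂(μH[(k : ℝ)]) :=
    sphere_integral_smul_aux k hR (fun w => g (dist x w))
  rw [L, Rr]
  push_cast
  ring
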